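/- Let X and Y be finite nonempty sets and F : X×Y → ℝ^d. For θ ∈ ℝ^d define p_θ(y|x) = exp(⟨θ,F(x,y)⟩)/∑_{y'∈Y} exp(⟨θ,F(x,y')⟩), let M(θ) ∈ ℝ^{d×X} be the matrix whose column indexed by x is ∑_{y∈Y} p_θ(y|x) F(x,y), let h_θ(x) = argmax_{y∈Y} ⟨θ,F(x,y)⟩, and let T(θ) ∈ ℝ^{d×X} be the matrix whose column indexed by x is (1/|h_θ(x)|) ∑_{y∈h_θ(x)} F(x,y). Then: (i) rank M(θ) ≤ rank F for every θ, where F is regarded as the d×(X×Y) matrix with columns F(x,y); and (ii) for every θ ∈ ℝ^d there exists α₀ > 0 such that rank M(αθ) ≥ rank T(θ) for all α ≥ α₀. In particular, max_{θ∈ℝ^d} rank M(θ) ≥ max_{θ∈ℝ^d} rank T(θ). -/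

import Mathlib

open scoped Classical BigOperators

open Matrix Filter

private lemma aux_rank_submatrix_le {d r : ℕ} {X : Type*} [Fintype X]
    (A : Matrix (Fin d) X ℝ) (e : Fin r → X) :
    (A.submatrix id e).rank ≤ A.rank := by
  classical
  have hEq : A.submatrix id e
      = A * (Matrix.of fun x j => if e j = x then (1 : ℝ) else 0) := by
    ext i j
    simp [Matrix.mul_apply, mul_ite, Finset.sum_ite_eq]
  rw [hEq]
  exact A.rank_mul_le_left _

private lemma aux_exists_cols {d : ℕ} {X : Type*} [Fintype X]
    (A : Matrix (Fin d) X ℝ) :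
    ∃ e : Fin A.rank → X, (A.submatrix id e).rank = A.rank := by
  classical
  obtain ⟨t, hts, hsp, hli⟩ := exists_linearIndependent ℝ (Set.range Aᵀ)
  have hfin : t.Finite := Set.finite_coe_iff.mp hli.finite
  haveI : Fintype t := hfin.fintype
  have hcard : Fintype.card t = A.rank := by
    rw [A.rank_eq_finrank_span_cols]
    change Fintype.card t = Module.finrank ℝ (Submodule.span ℝ (Set.range Aᵀ))
    rw [← hsp, finrank_span_set_eq_card hli,
      Set.toFinset_card]
  let g : Fin A.rank ≃ t := (Fintype.equivFinOfCardEq hcard).symm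
  have hch : ∀ j : Fin A.rank, ∃ x : X, Aᵀ x = ((g j : t) : Fin d → ℝ) := fun j => hts (g j).2
  choose e he using hch
  refine ⟨e, ?_⟩
  have hv : (A.submatrix id e)ᵀ = fun j => ((g j : t) : Fin d → ℝ) := by
    funext j i
    rw [← he j]
    rfl
  have hliv : LinearIndependent ℝ fun j : Fin A.rank => ((g j : t) : Fin d → ℝ) :=
    hli.comp g g.injective
  rw [Matrix.rank_eq_finrank_span_cols]
  change Module.finrank ℝ (Submodule.span ℝ (Set.range (A.submatrix id e)ᵀ)) = A.rank
  rw [hv, finrank_span_eq_card hliv, Fintype.card_fin]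

private lemma aux_det_ne_zero {r : ℕ} (C : Matrix (Fin r) (Fin r) ℝ) (hC : C.rank = r) :
    C.det ≠ 0 := by
  intro hdet
  obtain ⟨v, hv, hmv⟩ := (Matrix.exists_mulVec_eq_zero_iff).mpr hdet
  have hker : v ∈ LinearMap.ker C.mulVecLin := by
    simpa [Matrix.mulVecLin_apply] using hmv
  have hpos : 0 < Module.finrank ℝ (LinearMap.ker C.mulVecLin) := by
    have : Nontrivial (LinearMap.ker C.mulVecLin) :=
      nontrivial_of_ne ⟨v, hker⟩ 0 (by simpa [Subtype.ext_iff] using hv)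
    exact Module.finrank_pos
  have h1 := LinearMap.finrank_range_add_finrank_ker C.mulVecLin
  have h2 : Module.finrank ℝ (Fin r → ℝ) = r := by simp
  have h3 : C.rank = Module.finrank ℝ (LinearMap.range C.mulVecLin) := rfl
  omega

/-- Let `M(θ)` be the matrix with columns `∑_y p_θ(y|x) F(x,y)` (the
rank-relevant part of the Jacobian of the marginal model with sufficient statistics `F`),
and let `T(θ)` be the tropical morphism matrix with columns
`(1/|h_θ(x)|) ∑_{y∈h_θ(x)} F(x,y)`.  Then (i) `rank M(θ) ≤ rank F` for every `θ`;
(ii) for every `θ` there is `α₀ > 0` with `rank M(αθ) ≥ rank T(θ)` for all `α ≥ α₀`;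
in particular `max_θ rank M(θ) ≥ max_θ rank T(θ)`. -/
theorem rank_jacobian_vs_tropical
    {X Y : Type*} [Fintype X] [Fintype Y] [Nonempty X] [Nonempty Y]
    {d : ℕ} (F : X → Y → (Fin d → ℝ))
    (p : (Fin d → ℝ) → Y → X → ℝ)
    (hp : ∀ θ y x, p θ y x =
      Real.exp (∑ i, θ i * F x y i) / ∑ y' : Y, Real.exp (∑ i, θ i * F x y' i))
    (M : (Fin d → ℝ) → Matrix (Fin d) X ℝ)
    (hM : ∀ θ i x, M θ i x = ∑ y : Y, p θ y x * F x y i)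
    (h : (Fin d → ℝ) → X → Finset Y)
    (hh : ∀ θ x, h θ x = Finset.univ.filter
      (fun y => ∀ y' : Y, ∑ i, θ i * F x y' i ≤ ∑ i, θ i * F x y i))
    (T : (Fin d → ℝ) → Matrix (Fin d) X ℝ)
    (hT : ∀ θ i x, T θ i x = (1 / ((h θ x).card : ℝ)) * ∑ y ∈ h θ x, F x y i)
    (Fmat : Matrix (Fin d) (X × Y) ℝ)
    (hF : ∀ i x y, Fmat i (x, y) = F x y i) :
    (∀ θ : Fin d → ℝ, (M θ).rank ≤ Fmat.rank) ∧
    (∀ θ : Fin d → ℝ, ∃ α₀ : ℝ, 0 < α₀ ∧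
      ∀ α : ℝ, α₀ ≤ α → (T θ).rank ≤ (M (α • θ)).rank) ∧
    (∀ θ : Fin d → ℝ, ∃ θ' : Fin d → ℝ, (T θ).rank ≤ (M θ').rank) := by
  classical
  -- score function
  set s : (Fin d → ℝ) → X → Y → ℝ := fun θ x y => ∑ i, θ i * F x y i with hs
  -- Part (i)
  have part1 : ∀ θ : Fin d → ℝ, (M θ).rank ≤ Fmat.rank := by
    intro θ
    have hEq : M θ = Fmat * (Matrix.of fun xy x' => if xy.1 = x' then p θ xy.2 x' else 0) := by
      ext i x'
      rw [hM]
      show _ = ∑ xy, Fmat i xy * (Matrix.of fun xy x' => if xy.1 = x' then p θ xy.2 x' else 0) xy x'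
      simp only [Matrix.mul_apply, Matrix.of_apply]
      rw [Fintype.sum_prod_type]
      have key : ∀ x : X, (∑ y : Y, Fmat i (x, y) * (if x = x' then p θ y x' else 0))
          = if x = x' then ∑ y : Y, p θ y x' * F x y i else 0 := by
        intro x
        by_cases hx : x = x'
        · simp [hx, hF, mul_comm]
        · simp [hx]
      simp_rw [key]
      rw [Finset.sum_ite_eq' Finset.univ x' (fun x => ∑ y : Y, p θ y x' * F x y i)]
      simp
    rw [hEq]
    exact Fmat.rank_mul_le_left _
  -- membership in h
  have hmem : ∀ (θ : Fin d → ℝ) (x : X) (y : Y),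
      y ∈ h θ x ↔ ∀ y' : Y, s θ x y' ≤ s θ x y := by
    intro θ x y
    rw [hh]
    simp [hs]
  have hne : ∀ (θ : Fin d → ℝ) (x : X), (h θ x).Nonempty := by
    intro θ x
    obtain ⟨y₀, -, hy₀⟩ := Finset.exists_max_image Finset.univ (s θ x) Finset.univ_nonempty
    exact ⟨y₀, (hmem θ x y₀).mpr fun y' => hy₀ y' (Finset.mem_univ _)⟩
  -- Part (ii)
  have part2 : ∀ θ : Fin d → ℝ, ∃ α₀ : ℝ, 0 < α₀ ∧
      ∀ α : ℝ, α₀ ≤ α → (T θ).rank ≤ (M (α • θ)).rank := by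
    intro θ
    -- entrywise convergence of M (α • θ) to T θ
    have hconv : ∀ (i : Fin d) (x : X),
        Tendsto (fun α : ℝ => M (α • θ) i x) atTop (nhds (T θ i x)) := by
      intro i x
      obtain ⟨ym, hym⟩ := hne θ x
      set m : ℝ := s θ x ym with hm
      have hmax : ∀ y, s θ x y ≤ m := (hmem θ x ym).mp hym
      have hymem : ∀ y, y ∈ h θ x ↔ s θ x y = m := by
        intro y
        constructor
        · intro hy
          exact le_antisymm (hmax y) (((hmem θ x y).mp hy) ym)
        · intro hy
          exact (hmem θ x y).mpr fun y' => hy ▸ hmax y'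
      set c : ℝ := ((h θ x).card : ℝ) with hc
      have hcpos : (0 : ℝ) < c := by
        rw [hc]
        exact_mod_cast Finset.card_pos.mpr (hne θ x)
      -- limits of the exponentials
      have hA : ∀ y : Y, Tendsto (fun α : ℝ => Real.exp (α * (s θ x y - m))) atTop
          (nhds (if y ∈ h θ x then (1 : ℝ) else 0)) := by
        intro y
        by_cases hy : y ∈ h θ x
        · have : s θ x y - m = 0 := by rw [(hymem y).mp hy]; ring
          simp [this, hy, tendsto_const_nhds]
        · have hlt : s θ x y - m < 0 := by
            have : s θ x y ≠ m := fun hc' => hy ((hymem y).mpr hc')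
            have := lt_of_le_of_ne (hmax y) this
            linarith
          have h1 : Tendsto (fun α : ℝ => α * (s θ x y - m)) atTop atBot :=
            Tendsto.atTop_mul_const_of_neg hlt tendsto_id
          rw [if_neg hy]
          exact Real.tendsto_exp_atBot.comp h1
      have hB : Tendsto (fun α : ℝ => ∑ y' : Y, Real.exp (α * (s θ x y' - m))) atTop
          (nhds c) := by
        have := tendsto_finset_sum Finset.univ (fun y' _ => hA y')
        have hsum : (∑ y' : Y, (if y' ∈ h θ x then (1 : ℝ) else 0)) = c := by
          rw [Finset.sum_ite_mem, Finset.univ_inter, Finset.sum_const, hc]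
          simp
        rwa [hsum] at this
      -- representation of p (α • θ)
      have hrepr : ∀ (α : ℝ) (y : Y), p (α • θ) y x
          = Real.exp (α * (s θ x y - m)) / ∑ y' : Y, Real.exp (α * (s θ x y' - m)) := by
        intro α y
        rw [hp]
        have hA' : ∀ y' : Y, (∑ i', (α • θ) i' * F x y' i') = α * s θ x y' := by
          intro y'
          rw [hs, Finset.mul_sum]
          exact Finset.sum_congr rfl fun i' _ => by simp [mul_assoc]
        simp_rw [hA']
        have hE : ∀ cc : ℝ, Real.exp (α * (cc - m)) = Real.exp (α * cc) * Real.exp (-(α * m)) := by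
          intro cc
          rw [← Real.exp_add]
          ring_nf
        simp_rw [hE, ← Finset.sum_mul]
        rw [mul_div_mul_right _ _ (Real.exp_ne_zero _)]
      -- limit of p
      have hplim : ∀ y : Y, Tendsto (fun α : ℝ => p (α • θ) y x) atTop
          (nhds ((if y ∈ h θ x then (1 : ℝ) else 0) / c)) := by
        intro y
        have := (hA y).div hB (ne_of_gt hcpos)
        exact this.congr (fun α => (hrepr α y).symm)
      -- limit of the matrix entry
      have hMlim := tendsto_finset_sum Finset.univ
        (fun y (_ : y ∈ Finset.univ) => (hplim y).mul_const (F x y i))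
      have hTval : (∑ y : Y, ((if y ∈ h θ x then (1 : ℝ) else 0) / c) * F x y i) = T θ i x := by
        rw [hT]
        have : ∀ y : Y, ((if y ∈ h θ x then (1 : ℝ) else 0) / c) * F x y i
            = if y ∈ h θ x then (1 / c) * F x y i else 0 := by
          intro y
          by_cases hy : y ∈ h θ x <;> simp [hy]
        simp_rw [this]
        rw [Finset.sum_ite_mem, Finset.univ_inter, ← Finset.mul_sum, hc]
      rw [hTval] at hMlim
      have : (fun α : ℝ => M (α • θ) i x) = fun α : ℝ => ∑ y : Y, p (α • θ) y x * F x y i := by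
        funext α
        rw [hM]
      rw [this]
      exact hMlim
    -- column selection for T θ
    obtain ⟨e, hsub⟩ := aux_exists_cols (T θ)
    set C : Matrix (Fin (T θ).rank) (Fin (T θ).rank) ℝ :=
      ((T θ).submatrix id e)ᵀ * ((T θ).submatrix id e) with hCdef
    have hCrank : C.rank = (T θ).rank := by
      rw [hCdef, Matrix.rank_transpose_mul_self, hsub]
    have hCdet : C.det ≠ 0 := aux_det_ne_zero C hCrank
    -- Gram matrices of M (α • θ)
    set G : ℝ → Matrix (Fin (T θ).rank) (Fin (T θ).rank) ℝ := fun α =>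
      ((M (α • θ)).submatrix id e)ᵀ * ((M (α • θ)).submatrix id e) with hG
    have hGconv : Tendsto G atTop (nhds C) := by
      refine tendsto_pi_nhds.mpr ?_
      intro j
      rw [tendsto_pi_nhds]
      intro k
      have hent : ∀ α : ℝ, G α j k = ∑ i : Fin d, M (α • θ) i (e j) * M (α • θ) i (e k) := by
        intro α
        simp [hG, Matrix.mul_apply]
      have hCent : C j k = ∑ i : Fin d, T θ i (e j) * T θ i (e k) := by
        simp [hCdef, Matrix.mul_apply]
      rw [hCent]
      have := tendsto_finset_sum Finset.univ
        (fun i (_ : i ∈ Finset.univ) => (hconv i (e j)).mul (hconv i (e k)))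
      simpa [hent] using this
    have hdetconv : Tendsto (fun α => (G α).det) atTop (nhds C.det) :=
      (Continuous.matrix_det continuous_id).continuousAt.tendsto.comp hGconv
    have hev : ∀ᶠ α in atTop, (G α).det ≠ 0 := hdetconv.eventually_ne hCdet
    obtain ⟨a, ha⟩ := eventually_atTop.mp hev
    refine ⟨max a 1, lt_of_lt_of_le one_pos (le_max_right _ _), ?_⟩
    intro α hα
    have hαa : a ≤ α := le_trans (le_max_left _ _) hα
    have hdet : (G α).det ≠ 0 := ha α hαa
    have hunit : IsUnit (G α) :=
      (Matrix.isUnit_iff_isUnit_det _).mpr (isUnit_iff_ne_zero.mpr hdet)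
    have h1 : (G α).rank = (T θ).rank := by
      rw [Matrix.rank_of_isUnit _ hunit, Fintype.card_fin]
    have h2 : (G α).rank = ((M (α • θ)).submatrix id e).rank :=
      Matrix.rank_transpose_mul_self _
    calc (T θ).rank = (G α).rank := by rw [h1]
      _ = ((M (α • θ)).submatrix id e).rank := h2
      _ ≤ (M (α • θ)).rank := aux_rank_submatrix_le _ _
  refine ⟨part1, part2, ?_⟩
  intro θ
  obtain ⟨α₀, hα₀, hall⟩ := part2 θ
  exact ⟨α₀ • θ, hall α₀ le_rfl⟩
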